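/- Let f(z) = Σ a_n z^n with a_0 = 1, and let A_n(t), G_n(t) be the Chow-Eulerian and augmented Chow polynomials of the Toeplitz matrix (a_{n-k}). Then Σ_{n≥0} A_n(t)z^n = (1-t)f(tz)/(f(tz)-t·f(z)) = 1 - t + t·H(z,t), and Σ_{n≥0} G_n(t)z^n = (1-t)f(tz)f(z)/(f(tz)-t·f(z)), where H(z,t) = Σ H_n(t)z^n is the Chow generating function. -/

import Mathlib

open Polynomial

private lemma reflect_of_le' {R : Type*} [CommRing R] {p : R[X]} {k n : ℕ}
    (hd : p.natDegree ≤ k) (hk : k ≤ n) :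
    reflect n p = X ^ (n - k) * reflect k p := by
  have h := reflect_mul (1 : R[X]) p (F := n - k) (G := k)
    (le_trans natDegree_one.le (Nat.zero_le _)) hd
  rw [one_mul, reflect_one, Nat.sub_add_cancel hk] at h
  exact h

private lemma reflect_sum' {R : Type*} [CommRing R] (s : Finset ℕ) (f : ℕ → R[X]) (N : ℕ) :
    reflect N (∑ k ∈ s, f k) = ∑ k ∈ s, reflect N (f k) := by
  induction s using Finset.cons_induction with
  | empty => simp
  | cons i s hi ih => rw [Finset.sum_cons, Finset.sum_cons, reflect_add, ih]

private lemma mk_mul_mk' {R : Type*} [CommRing R] (b p : ℕ → R[X]) :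
    PowerSeries.mk b * PowerSeries.mk p =
      PowerSeries.mk fun n => ∑ k ∈ Finset.range (n + 1), b (n - k) * p k := by
  refine PowerSeries.ext fun n => ?_
  rw [PowerSeries.coeff_mul, Finset.Nat.sum_antidiagonal_eq_sum_range_succ_mk]
  simp only [PowerSeries.coeff_mk]
  rw [← Finset.sum_range_reflect (fun k => b (n - k) * p k) (n + 1)]
  refine Finset.sum_congr rfl fun k hk => ?_
  rw [Finset.mem_range] at hk
  congr 2
  omega

/-- `d`, `H` are the Chow-derangement and Chow polynomials of the Toeplitz matrix
`(a_{n-k})`. -/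
def ToeplitzChow {A : Type*} [CommRing A] (a : ℕ → A) (d H : ℕ → A[X]) : Prop :=
  d 0 = 1 ∧
  (∀ n, (d n).natDegree ≤ n) ∧
  (∀ n, reflect n (d n) = d n) ∧
  (∀ n, H n = ∑ k ∈ Finset.range (n + 1), C (a (n - k)) * d k) ∧
  (∀ n, 1 ≤ n → reflect n (H n) = X * H n)

/-- `A`, `G` are the Chow-Eulerian and augmented Chow polynomials of the Toeplitz
matrix `(a_{n-k})`: `A 0 = 1`, `tⁿ Gₙ(1/t) = Gₙ`, `tⁿ Aₙ(1/t) = Aₙ/t` for `n ≥ 1`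
(i.e. `t^{n+1} Aₙ(1/t) = Aₙ`), and `Gₙ = Σ_{k≤n} a_{n-k} A_k`. -/
def ToeplitzAugChow {R : Type*} [CommRing R] (a : ℕ → R) (A G : ℕ → R[X]) : Prop :=
  A 0 = 1 ∧
  (∀ n, (A n).natDegree ≤ n) ∧
  (∀ n, 1 ≤ n → reflect (n + 1) (A n) = A n) ∧
  (∀ n, (G n).natDegree ≤ n) ∧
  (∀ n, reflect n (G n) = G n) ∧
  (∀ n, G n = ∑ k ∈ Finset.range (n + 1), C (a (n - k)) * A k)

/-- `Σ Aₙ(t) zⁿ = (1-t)f(tz)/(f(tz)-t f(z)) = 1 - t + t·H(z,t)` and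
`Σ Gₙ(t) zⁿ = (1-t)f(tz)f(z)/(f(tz)-t f(z))`, stated multiplicatively. -/
theorem stmt16 {R : Type*} [CommRing R] [IsDomain R] (a : ℕ → R) (ha : a 0 = 1)
    (d H A G : ℕ → R[X]) (hdH : ToeplitzChow a d H) (hAG : ToeplitzAugChow a A G) :
    (PowerSeries.mk fun n => A n) *
        (PowerSeries.mk (fun n => C (a n) * X ^ n) -
          PowerSeries.C (R := R[X]) X * PowerSeries.mk fun n => C (a n)) =
      PowerSeries.C (R := R[X]) (1 - X) * PowerSeries.mk (fun n => C (a n) * X ^ n) ∧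
    (PowerSeries.mk fun n => A n) =
      PowerSeries.C (R := R[X]) (1 - X) +
        PowerSeries.C (R := R[X]) X * (PowerSeries.mk fun n => H n) ∧
    (PowerSeries.mk fun n => G n) *
        (PowerSeries.mk (fun n => C (a n) * X ^ n) -
          PowerSeries.C (R := R[X]) X * PowerSeries.mk fun n => C (a n)) =
      PowerSeries.C (R := R[X]) (1 - X) * PowerSeries.mk (fun n => C (a n) * X ^ n) *
        PowerSeries.mk fun n => C (a n) := by
  obtain ⟨hd0, hddeg, hdrefl, hHdef, hHrefl⟩ := hdH
  obtain ⟨hA0, hAdeg, hArefl, hGdeg, hGrefl, hGdef⟩ := hAG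
  set F1 : PowerSeries R[X] := PowerSeries.mk fun n => C (a n) * X ^ n with hF1
  set F0 : PowerSeries R[X] := PowerSeries.mk fun n => C (a n) with hF0
  have hH0 : H 0 = 1 := by
    rw [hHdef]
    simp [hd0, ha]
  have hmkH : (PowerSeries.mk fun n => H n) = F0 * PowerSeries.mk d := by
    rw [hF0, mk_mul_mk']
    exact congrArg _ (funext fun n => hHdef n)
  have hmkG : (PowerSeries.mk fun n => G n) = F0 * PowerSeries.mk fun n => A n := by
    rw [hF0, mk_mul_mk']
    exact congrArg _ (funext fun n => hGdef n)
  have hreflsum : ∀ (p : ℕ → R[X]), (∀ k, (p k).natDegree ≤ k) → ∀ n : ℕ,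
      reflect n (∑ k ∈ Finset.range (n + 1), C (a (n - k)) * p k)
        = ∑ k ∈ Finset.range (n + 1), C (a (n - k)) * (X ^ (n - k) * reflect k (p k)) := by
    intro p hp n
    rw [reflect_sum']
    refine Finset.sum_congr rfl fun k hk => ?_
    rw [Finset.mem_range, Nat.lt_succ_iff] at hk
    rw [reflect_C_mul, reflect_of_le' (hp k) hk]
  have hDW : PowerSeries.mk d * (F1 - PowerSeries.C (R := R[X]) X * F0)
      = PowerSeries.C (R := R[X]) (1 - X) := by
    have e1 : PowerSeries.mk d * F1 = PowerSeries.mk fun n => reflect n (H n) := by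
      rw [mul_comm, hF1, mk_mul_mk']
      refine congrArg _ (funext fun n => ?_)
      rw [hHdef, hreflsum d hddeg n]
      exact (Finset.sum_congr rfl fun k _ => by rw [hdrefl, mul_assoc]).symm
    have e2 : PowerSeries.mk d * (PowerSeries.C (R := R[X]) X * F0)
        = PowerSeries.C (R := R[X]) X * PowerSeries.mk fun n => H n := by
      rw [hmkH]; ring
    rw [mul_sub, e1, e2]
    refine PowerSeries.ext fun n => ?_
    rw [map_sub, PowerSeries.coeff_mk, PowerSeries.coeff_C_mul, PowerSeries.coeff_mk,
      PowerSeries.coeff_C]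
    rcases Nat.eq_zero_or_pos n with hn | hn
    · subst hn; simp [hH0]
    · rw [hHrefl n hn, sub_self, if_neg (by omega)]
  have hXA : ∀ k, 1 ≤ k → X * reflect k (A k) = A k := by
    intro k hk
    have h := reflect_of_le' (hAdeg k) (Nat.le_succ k)
    rw [hArefl k hk] at h
    have h1k : k + 1 - k = 1 := by omega
    rw [h1k, pow_one] at h
    exact h.symm
  have h1 : (PowerSeries.mk fun n => A n) * (F1 - PowerSeries.C (R := R[X]) X * F0)
      = PowerSeries.C (R := R[X]) (1 - X) * F1 := by
    have eQ : (PowerSeries.mk fun n => A n) * F1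
        = PowerSeries.mk fun n =>
            ∑ k ∈ Finset.range (n + 1), C (a (n - k)) * X ^ (n - k) * A k := by
      rw [mul_comm, hF1, mk_mul_mk']
    have eG : (PowerSeries.mk fun n => A n) * (PowerSeries.C (R := R[X]) X * F0)
        = PowerSeries.C (R := R[X]) X * PowerSeries.mk fun n => G n := by
      rw [hmkG]; ring
    rw [mul_sub, eQ, eG]
    refine PowerSeries.ext fun n => ?_
    rw [map_sub, PowerSeries.coeff_mk, PowerSeries.coeff_C_mul, PowerSeries.coeff_mk,
      PowerSeries.coeff_C_mul, hF1, PowerSeries.coeff_mk]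
    have hGr : X * G n
        = ∑ k ∈ Finset.range (n + 1), C (a (n - k)) * X ^ (n - k) * (X * reflect k (A k)) := by
      conv_lhs => rw [← hGrefl n]
      rw [hGdef n, hreflsum A hAdeg n, Finset.mul_sum]
      exact Finset.sum_congr rfl fun k _ => by ring
    rw [hGr, ← Finset.sum_sub_distrib]
    have hsingle : (∑ k ∈ Finset.range (n + 1),
        (C (a (n - k)) * X ^ (n - k) * A k
          - C (a (n - k)) * X ^ (n - k) * (X * reflect k (A k))))
        = C (a (n - 0)) * X ^ (n - 0) * A 0
          - C (a (n - 0)) * X ^ (n - 0) * (X * reflect 0 (A 0)) := by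
      refine Finset.sum_eq_single_of_mem 0 (Finset.mem_range.mpr n.succ_pos)
        fun k hk hk0 => ?_
      rw [hXA k (Nat.one_le_iff_ne_zero.mpr hk0), sub_self]
    rw [hsingle, hA0, reflect_one]
    simp only [Nat.sub_zero]
    ring
  have hWne : F1 - PowerSeries.C (R := R[X]) X * F0 ≠ 0 := by
    intro h
    have h0 := congrArg (PowerSeries.constantCoeff (R := R[X])) h
    simp only [map_sub, map_mul, PowerSeries.constantCoeff_C, hF1, hF0,
      PowerSeries.constantCoeff_mk, map_zero] at h0
    rw [ha, map_one, pow_zero, mul_one, mul_one] at h0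
    have h2 := congrArg (fun p : R[X] => p.coeff 1) h0
    simp [Polynomial.coeff_one] at h2
  have hC : PowerSeries.C (R := R[X]) (1 - X) = 1 - PowerSeries.C (R := R[X]) X := by
    rw [map_sub, map_one]
  have hHW : (PowerSeries.mk fun n => H n) * (F1 - PowerSeries.C (R := R[X]) X * F0)
      = F0 * PowerSeries.C (R := R[X]) (1 - X) := by
    rw [hmkH, mul_assoc, hDW]
  have h2 : (PowerSeries.mk fun n => A n)
      = PowerSeries.C (R := R[X]) (1 - X)
        + PowerSeries.C (R := R[X]) X * (PowerSeries.mk fun n => H n) := by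
    refine mul_right_cancel₀ hWne ?_
    rw [h1, add_mul, mul_assoc, hHW, hC]
    ring
  have h3 : (PowerSeries.mk fun n => G n) * (F1 - PowerSeries.C (R := R[X]) X * F0)
      = PowerSeries.C (R := R[X]) (1 - X) * F1 * F0 := by
    rw [hmkG, mul_assoc, h1]
    ring
  exact ⟨h1, h2, h3⟩
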